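/- Let I ⊆ ℝ be an open interval, b, c, f₁ : ℝ → ℝ with c(x) ≠ 0 on I, let C₁ ∈ ℝ, let F be differentiable on I with F'(x) = (f₁(x) − b(x)²)/(2c(x)), and define a(x) = ( f₁(x) − ( b(x) + c(x)·(F(x) − C₁) )² ) / (4c(x)). Let B be differentiable on I with B'(x) = b(x) + c(x)·(F(x) − C₁), and G differentiable on I with G'(x) = c(x)·exp(B(x)). Then for every constant C₀ ∈ ℝ, the function y(x) = (F(x) − C₁)/2 + exp(B(x))/(C₀ − G(x)) satisfies y'(x) = a(x) + b(x)y(x) + c(x)y(x)² at every x ∈ I with C₀ − G(x) ≠ 0. -/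

import Mathlib

/-- Theorem 1 (Case 1): with `F' = (f₁ − b²)/(2c)`,
`a = (f₁ − (b + c(F − C₁))²)/(4c)`, `B' = b + c(F − C₁)` and `G' = c · exp B`,
the function `y = (F − C₁)/2 + exp B / (C₀ − G)` solves the Riccati equation
wherever `C₀ − G ≠ 0`. -/
theorem riccati_case1_general
    (p q : ℝ) (a b c f₁ F B G : ℝ → ℝ) (C₁ : ℝ)
    (hc : ∀ x ∈ Set.Ioo p q, c x ≠ 0)
    (hF : ∀ x ∈ Set.Ioo p q,
      HasDerivAt F ((f₁ x - b x ^ 2) / (2 * c x)) x)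
    (ha : ∀ x ∈ Set.Ioo p q,
      a x = (f₁ x - (b x + c x * (F x - C₁)) ^ 2) / (4 * c x))
    (hB : ∀ x ∈ Set.Ioo p q,
      HasDerivAt B (b x + c x * (F x - C₁)) x)
    (hG : ∀ x ∈ Set.Ioo p q, HasDerivAt G (c x * Real.exp (B x)) x)
    (C₀ : ℝ) :
    ∀ x ∈ Set.Ioo p q, C₀ - G x ≠ 0 →
      HasDerivAt (fun t => (F t - C₁) / 2 + Real.exp (B t) / (C₀ - G t))
        (a x + b x * ((F x - C₁) / 2 + Real.exp (B x) / (C₀ - G x))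
          + c x * ((F x - C₁) / 2 + Real.exp (B x) / (C₀ - G x)) ^ 2) x := by
  intro x hx hne
  have hcx := hc x hx
  have hFx := hF x hx
  have hBx := hB x hx
  have hGx := hG x hx
  have h1 : HasDerivAt (fun t => (F t - C₁) / 2)
      ((f₁ x - b x ^ 2) / (2 * c x) / 2) x := ((hFx.sub_const C₁).div_const 2)
  have hnum : HasDerivAt (fun t => Real.exp (B t))
      (Real.exp (B x) * (b x + c x * (F x - C₁))) x := by
    exact hBx.exp
  have hden : HasDerivAt (fun t => C₀ - G t) (-(c x * Real.exp (B x))) x :=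
    (hGx.const_sub C₀)
  have h2 : HasDerivAt (fun t => Real.exp (B t) / (C₀ - G t))
      ((Real.exp (B x) * (b x + c x * (F x - C₁)) * (C₀ - G x)
        - Real.exp (B x) * (-(c x * Real.exp (B x)))) / (C₀ - G x) ^ 2) x :=
    hnum.div hden hne
  have := h1.add h2
  refine this.congr_deriv ?_
  rw [ha x hx]
  field_simp
  ring
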